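/- For every real M > 0 there exists a constant c > 0 such that for every real λ ≥ 1 and every r ∈ [0, M] one has λ · ∫_{−1/λ}^{1/λ} |log |r − t|| dt ≤ c + c · log λ. -/

import Mathlib

open MeasureTheory Set Filter Topology



lemma aux_neg_log_le (x : ℝ) (hx : 0 < x) : -Real.log x ≤ 2 * x ^ (-(1/2) : ℝ) := by
  have hy : 0 < x ^ (-(1/2) : ℝ) := Real.rpow_pos_of_pos hx _
  have h1 : Real.log (x ^ (-(1/2):ℝ)) = (-(1/2)) * Real.log x := Real.log_rpow hx _
  have h2 : Real.log (x ^ (-(1/2):ℝ)) ≤ x ^ (-(1/2):ℝ) - 1 := Real.log_le_sub_one_of_pos hy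
  nlinarith

lemma intervalIntegrable_log_nonneg (v : ℝ) (hv : 0 ≤ v) :
    IntervalIntegrable Real.log volume 0 v := by
  rcases hv.eq_or_lt with h | h
  · exact h ▸ IntervalIntegrable.refl
  have hrpow : IntervalIntegrable (fun x : ℝ => x ^ (-(1/2):ℝ)) volume 0 v :=
    intervalIntegral.intervalIntegrable_rpow' (by norm_num)
  have hg : IntervalIntegrable
      (fun x : ℝ => 2 * x ^ (-(1/2):ℝ) + max 0 (Real.log v)) volume 0 v :=
    (hrpow.const_mul 2).add intervalIntegrable_const
  refine hg.mono_fun' Real.measurable_log.aestronglyMeasurable ?_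
  rw [Set.uIoc_of_le hv]
  filter_upwards [ae_restrict_mem measurableSet_Ioc] with x hx
  have hx0 : 0 < x := hx.1
  have hy : 0 ≤ x ^ (-(1/2) : ℝ) := (Real.rpow_pos_of_pos hx0 _).le
  have hb := aux_neg_log_le x hx0
  simp only [Real.norm_eq_abs]
  rcases le_or_gt 1 x with h1 | h1
  · have hlog0 : 0 ≤ Real.log x := Real.log_nonneg h1
    have : Real.log x ≤ Real.log v := Real.log_le_log hx0 hx.2
    rw [abs_of_nonneg hlog0]
    have : Real.log x ≤ max 0 (Real.log v) := this.trans (le_max_right _ _)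
    linarith
  · have hlog0 : Real.log x ≤ 0 := Real.log_nonpos hx0.le h1.le
    rw [abs_of_nonpos hlog0]
    have : 0 ≤ max 0 (Real.log v) := le_max_left _ _
    linarith

lemma integral_log_nonneg' (v : ℝ) (hv : 0 ≤ v) :
    ∫ x in (0:ℝ)..v, Real.log x = v * Real.log v - v := by
  rcases hv.eq_or_lt with h | h
  · rw [← h]; simp
  have hderiv : ∀ x ∈ Ioo (0:ℝ) v,
      HasDerivAt (fun x : ℝ => x * Real.log x - x) (Real.log x) x := by
    intro x hx
    have := (Real.hasDerivAt_mul_log hx.1.ne').sub (hasDerivAt_id x)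
    simp at this; exact this
  have ha : Tendsto (fun x : ℝ => x * Real.log x - x) (𝓝[>] (0:ℝ)) (𝓝 0) := by
    have := (Real.continuous_mul_log.sub continuous_id).tendsto 0
    simp only [Pi.sub_apply, Real.log_zero, mul_zero, zero_mul, id_eq, sub_zero] at this
    exact this.mono_left nhdsWithin_le_nhds
  have hb : Tendsto (fun x : ℝ => x * Real.log x - x) (𝓝[<] v)
      (𝓝 (v * Real.log v - v)) :=
    ((Real.continuous_mul_log.sub continuous_id).tendsto v).mono_left nhdsWithin_le_nhds
  have := intervalIntegral.integral_eq_sub_of_hasDerivAt_of_tendsto h hderiv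
    (intervalIntegrable_log_nonneg v hv) ha hb
  rw [this]; ring

lemma intervalIntegrable_log_all (u v : ℝ) : IntervalIntegrable Real.log volume u v := by
  have key : ∀ w : ℝ, IntervalIntegrable Real.log volume 0 w := by
    intro w
    rcases le_or_gt 0 w with h | h
    · exact intervalIntegrable_log_nonneg w h
    · have h2 : IntervalIntegrable (fun x => Real.log (-x)) volume (-0) (-(-w)) :=
        (IntervalIntegrable.iff_comp_neg (by simp)).mp (intervalIntegrable_log_nonneg (-w) (by linarith))
      simp only [Real.log_neg_eq_log, neg_zero, neg_neg] at h2
      exact h2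
  exact (key u).symm.trans (key v)

lemma integral_log_all (u v : ℝ) :
    ∫ x in u..v, Real.log x
      = (v * Real.log v - v) - (u * Real.log u - u) := by
  have key : ∀ w : ℝ, ∫ x in (0:ℝ)..w, Real.log x = w * Real.log w - w := by
    intro w
    rcases le_or_gt 0 w with h | h
    · exact integral_log_nonneg' w h
    · have h1 : ∫ x in (0:ℝ)..w, Real.log x = ∫ x in (0:ℝ)..w, Real.log (-x) :=
        intervalIntegral.integral_congr fun x _ => (Real.log_neg_eq_log x).symm
      rw [h1, intervalIntegral.integral_comp_neg (fun x => Real.log x), neg_zero,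
        intervalIntegral.integral_symm, integral_log_nonneg' (-w) (by linarith),
        Real.log_neg_eq_log]
      ring
  have hadd := intervalIntegral.integral_add_adjacent_intervals
    (intervalIntegrable_log_all u 0) (intervalIntegrable_log_all 0 v)
  have hu0 : ∫ x in u..(0:ℝ), Real.log x = -(u * Real.log u - u) := by
    rw [intervalIntegral.integral_symm, key u]
  rw [← hadd, hu0, key v]; ring

lemma key_min (a b : ℝ) (ha : 0 < a) (hb : 0 ≤ b) :
    2 * (a * Real.log a - a) ≤
      ((b+a) * Real.log (b+a) - (b+a)) - ((b-a) * Real.log (b-a) - (b-a)) := by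
  rcases le_or_gt a b with h | h
  · have hu : 0 < b + a := by linarith
    have l1 : Real.log a ≤ Real.log (b+a) := Real.log_le_log ha (by linarith)
    have l2 : (b-a) * Real.log (b-a) ≤ (b-a) * Real.log (b+a) := by
      rcases (sub_nonneg.mpr h).eq_or_lt' with h0 | h0
      · rw [h0]; simp
      · exact mul_le_mul_of_nonneg_left (Real.log_le_log h0 (by linarith)) (by linarith)
    nlinarith
  · have hp : 0 < a + b := by linarith
    have hq : 0 < a - b := by linarith
    have ineq : ∀ t : ℝ, 0 < t → t * Real.log a + (t - a) ≤ t * Real.log t := by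
      intro t ht
      have := Real.log_le_sub_one_of_pos (show 0 < a / t by positivity)
      rw [Real.log_div ha.ne' ht.ne'] at this
      have h2 : t * (Real.log a - Real.log t) ≤ t * (a / t - 1) :=
        mul_le_mul_of_nonneg_left this ht.le
      have h3 : t * (a / t - 1) = a - t := by field_simp
      nlinarith
    have i1 := ineq (a+b) hp
    have i2 := ineq (a-b) hq
    have hlogq : Real.log (b-a) = Real.log (a-b) := by
      rw [← Real.log_neg_eq_log (b-a), neg_sub]
    rw [hlogq]
    have e1 : b + a = a + b := by ring
    rw [e1]
    nlinarith
open MeasureTheory Set Filter Topology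

/-- Elementary one-dimensional estimate, near regime:
`λ · ∫_{−1/λ}^{1/λ} |log|r − t|| dt ≤ c + c·log λ` for `λ ≥ 1` and `0 ≤ r ≤ M`. -/
theorem one_dim_log_integral_estimate_near (M : ℝ) (hM : 0 < M) :
    ∃ c > (0 : ℝ), ∀ l : ℝ, 1 ≤ l → ∀ r : ℝ, 0 ≤ r → r ≤ M →
      l * ∫ t in (-(1 / l))..(1 / l), abs (Real.log (abs (r - t)))
        ≤ c + c * Real.log l := by
  have hlogM : 0 ≤ Real.log (M + 1) := Real.log_nonneg (by linarith)
  refine ⟨4 * Real.log (M + 1) + 2, by linarith, ?_⟩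
  intro l hl r hr hrM
  have hl0 : 0 < l := by linarith
  set a : ℝ := 1 / l with ha_def
  have ha : 0 < a := by positivity
  have ha1 : a ≤ 1 := by rw [ha_def]; exact div_le_one_of_le₀ hl hl0.le
  have hloga : Real.log a = -Real.log l := by rw [ha_def, one_div, Real.log_inv]
  have hlogl : 0 ≤ Real.log l := Real.log_nonneg hl
  -- rewrite integrand
  have hcongr : (fun t => abs (Real.log (abs (r - t)))) = fun t => |Real.log (r - t)| := by
    funext t; rw [Real.log_abs]
  -- integrability
  have hIlog : IntervalIntegrable (fun t => Real.log (r - t)) volume (-a) a := by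
    have := (intervalIntegrable_log_all (r + a) (r - a)).comp_sub_left r
    simpa using this
  have hIabs : IntervalIntegrable (fun t => |Real.log (r - t)|) volume (-a) a := hIlog.abs
  have hIg : IntervalIntegrable (fun t => 2 * Real.log (M + 1) - Real.log (r - t))
      volume (-a) a := intervalIntegrable_const.sub hIlog
  -- pointwise bound and monotonicity
  have hmono : (∫ t in (-a)..a, |Real.log (r - t)|)
      ≤ ∫ t in (-a)..a, (2 * Real.log (M + 1) - Real.log (r - t)) := by
    refine intervalIntegral.integral_mono_on (by linarith) hIabs hIg ?_
    intro t ht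
    have ht1 : -a ≤ t := ht.1
    have ht2 : t ≤ a := ht.2
    have hxle : |r - t| ≤ M + 1 := by
      rw [abs_le]; constructor <;> nlinarith
    rw [← Real.log_abs (r - t)]
    rcases eq_or_lt_of_le (abs_nonneg (r - t)) with h0 | h0
    · rw [← h0]; simp only [Real.log_zero, abs_zero, sub_zero]; linarith
    · have hlogle : Real.log |r - t| ≤ Real.log (M + 1) := Real.log_le_log h0 hxle
      rcases abs_cases (Real.log |r - t|) with ⟨he, _⟩ | ⟨he, _⟩ <;> rw [he] <;> linarith
  -- compute the right-hand side integral
  have hshift : (∫ t in (-a)..a, Real.log (r - t)) = ∫ x in (r - a)..(r + a), Real.log x := by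
    have := intervalIntegral.integral_comp_sub_left (a := -a) (b := a)
      (fun x => Real.log x) r
    simp only [sub_neg_eq_add] at this; exact this
  have hval : (∫ t in (-a)..a, (2 * Real.log (M + 1) - Real.log (r - t)))
      = (2 * a) * (2 * Real.log (M + 1))
        - (((r + a) * Real.log (r + a) - (r + a))
            - ((r - a) * Real.log (r - a) - (r - a))) := by
    rw [intervalIntegral.integral_sub intervalIntegrable_const hIlog,
      intervalIntegral.integral_const, hshift, integral_log_all]
    rw [smul_eq_mul]; ring
  -- lower bound via key_min
  have hkey := key_min a r ha hr
  have hIbound : (∫ t in (-a)..a, |Real.log (r - t)|)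
      ≤ 4 * a * Real.log (M + 1) - 2 * a * Real.log a + 2 * a := by
    have : (r + a) = r + a := rfl
    calc (∫ t in (-a)..a, |Real.log (r - t)|)
        ≤ (2 * a) * (2 * Real.log (M + 1))
            - (((r + a) * Real.log (r + a) - (r + a))
              - ((r - a) * Real.log (r - a) - (r - a))) := by rw [← hval]; exact hmono
      _ ≤ (2 * a) * (2 * Real.log (M + 1)) - 2 * (a * Real.log a - a) := by linarith
      _ = 4 * a * Real.log (M + 1) - 2 * a * Real.log a + 2 * a := by ring
  -- conclude
  have hla : l * a = 1 := by rw [ha_def]; field_simp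
  have hfinal : l * (∫ t in (-a)..a, |Real.log (r - t)|)
      ≤ 4 * Real.log (M + 1) + 2 * Real.log l + 2 := by
    have h2 := mul_le_mul_of_nonneg_left hIbound hl0.le
    calc l * (∫ t in (-a)..a, |Real.log (r - t)|)
        ≤ l * (4 * a * Real.log (M + 1) - 2 * a * Real.log a + 2 * a) := h2
      _ = 4 * (l * a) * Real.log (M + 1) - 2 * (l * a) * Real.log a + 2 * (l * a) := by ring
      _ = 4 * Real.log (M + 1) + 2 * Real.log l + 2 := by rw [hla, hloga]; ring
  have hgoal : l * (∫ t in (-a)..a, abs (Real.log (abs (r - t))))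
      ≤ 4 * Real.log (M + 1) + 2 * Real.log l + 2 := by rw [hcongr]; exact hfinal
  calc l * ∫ t in (-(1/l))..(1/l), abs (Real.log (abs (r - t))) 
      ≤ 4 * Real.log (M + 1) + 2 * Real.log l + 2 := hgoal
    _ ≤ (4 * Real.log (M + 1) + 2) + (4 * Real.log (M + 1) + 2) * Real.log l := by nlinarith
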